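/- Let k = (k_s), l = (l_s), m = (m_s) be sequences with 2k_s < m_s, and let Δ be the subgroup of the direct product ∏_s (ℤ/m_sℤ ≀ D_{l_s}) generated by the three diagonal sequences τ = ((+1,𝟙))_s, α = ((0, a_s δ₀))_s, β = ((0, b_s δ_{k_s}))_s. If R < (min_s k_s − 1)/2, then a word of length at most 2R in the three generators represents the identity in Δ if and only if it represents the identity in ℤ ≀ D₂ with its standard marked generating set. -/

import Mathlib

/-- The shift automorphism of the group of `L`-valued functions on `B`. -/
def shiftEquiv {B : Type*} [AddGroup B] {L : Type*} [Group L] (b : B) :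
    (B → L) ≃* (B → L) where
  toFun f x := f (x - b)
  invFun f x := f (x + b)
  left_inv f := by funext x; simp
  right_inv f := by funext x; simp
  map_mul' f g := rfl

/-- The shift action of `B` on `B → L`, as a homomorphism to automorphisms. -/
def shiftHom (B : Type*) [AddCommGroup B] (L : Type*) [Group L] :
    Multiplicative B →* MulAut (B → L) where
  toFun b := shiftEquiv (Multiplicative.toAdd b)
  map_one' := by ext f x; simp [shiftEquiv]
  map_mul' b c := by ext f x; simp [shiftEquiv, sub_sub]

/-- The (unrestricted) wreath product `L ≀ B`, containing the lamplighter group `B ≀ L`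
of the paper as the subgroup generated by the marked generators. -/
abbrev Wr (B : Type*) [AddCommGroup B] (L : Type*) [Group L] :=
  (B → L) ⋊[shiftHom B L] Multiplicative B

/-- The function equal to `v` at `g` and neutral elsewhere. -/
def delta {B : Type*} [DecidableEq B] {L : Type*} [Group L] (g : B) (v : L) : B → L :=
  fun x => if x = g then v else 1

/-- The marked generators `τ = (+1, 𝟙)`, `α = (0, a δ₀)`, `β = (0, b δ_k)` of
`Γ(k, l, m) = (ℤ/mℤ) ≀ D_l` (with `m = 0` meaning `ℤ`, and `l = 0` meaning `D_∞`). -/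
def gammaGens (k l m : ℕ) : Fin 3 → Wr (ZMod m) (DihedralGroup l) :=
  ![⟨1, Multiplicative.ofAdd 1⟩,
    ⟨delta 0 (DihedralGroup.sr 0), 1⟩,
    ⟨delta (k : ZMod m) (DihedralGroup.sr 1), 1⟩]

/-- The diagonal generating triple of the infinite diagonal product
`Δ(k,l,m) ≤ ∏_s Γ(k_s, l_s, m_s)`. -/
def diagGens (k l m : ℕ → ℕ) : Fin 3 → (∀ s, Wr (ZMod (m s)) (DihedralGroup (l s))) :=
  fun i s => gammaGens (k s) (l s) (m s) i


section Aux
open DihedralGroup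

/-- sign of a letter -/
def eps (s : Bool) : ℤ := cond s 1 (-1)

lemma eps_natAbs (s : Bool) : (eps s).natAbs = 1 := by cases s <;> rfl

/-- count of letters with index `i₀` toggled at trigger position `t`. -/
def cnt (m : ℕ) (i₀ : Fin 3) (t : ZMod m) : List (Fin 3 × Bool) → ZMod m → ℕ
  | [], _ => 0
  | (i, s) :: L, x =>
    if i = 0 then cnt m i₀ t L (x - (eps s : ZMod m))
    else (if i = i₀ ∧ x = t then 1 else 0) + cnt m i₀ t L x

/-- function part of the evaluation of a word in `Γ(k,l,m)`. -/
def fcm (m : ℕ) {G : Type*} [Group G] (a b : G) (K : ZMod m) :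
    List (Fin 3 × Bool) → ZMod m → G
  | [], _ => 1
  | (i, s) :: L, x =>
    if i = 0 then fcm m a b K L (x - (eps s : ZMod m))
    else if i = 1 then (if x = 0 then a else 1) * fcm m a b K L x
    else (if x = K then b else 1) * fcm m a b K L x

/-- total displacement. -/
def tdisp : List (Fin 3 × Bool) → ℤ
  | [] => 0
  | (i, s) :: L => (if i = 0 then eps s else 0) + tdisp L

/-- cursor positions at which a toggle may occur. -/
def sums : List (Fin 3 × Bool) → List ℤ
  | [] => []
  | (i, s) :: L => if i = 0 then (sums L).map (· + eps s) else 0 :: sums L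

lemma tsum_natAbs : ∀ L : List (Fin 3 × Bool), (tdisp L).natAbs ≤ L.length := by
  intro L; induction L with
  | nil => simp [tdisp]
  | cons p L ih =>
    have := Int.natAbs_add_le (if p.1 = 0 then eps p.2 else 0) (tdisp L)
    have h1 : (if p.1 = 0 then eps p.2 else 0).natAbs ≤ 1 := by
      split <;> simp [eps_natAbs]
    simp only [tdisp, List.length_cons]
    omega

lemma sums_natAbs : ∀ (L : List (Fin 3 × Bool)) (c : ℤ), c ∈ sums L → c.natAbs ≤ L.length := by
  intro L; induction L with
  | nil => intro c hc; simp [sums] at hc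
  | cons p L ih =>
    intro c hc
    by_cases hp : p.1 = 0
    · simp only [sums, if_pos hp] at hc
      obtain ⟨c', hc', rfl⟩ := List.mem_map.mp hc
      have := ih c' hc'
      have := Int.natAbs_add_le c' (eps p.2)
      have := eps_natAbs p.2
      simp only [List.length_cons]
      omega
    · simp only [sums, if_neg hp] at hc
      rcases List.mem_cons.mp hc with rfl | hc
      · simp
      · have := ih c hc; simp only [List.length_cons]; omega

lemma sums_spread : ∀ (L : List (Fin 3 × Bool)) (c₁ c₂ : ℤ), c₁ ∈ sums L → c₂ ∈ sums L →
    (c₁ - c₂).natAbs ≤ L.length := by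
  intro L; induction L with
  | nil => intro c₁ c₂ h _; simp [sums] at h
  | cons p L ih =>
    intro c₁ c₂ h₁ h₂
    by_cases hp : p.1 = 0
    · simp only [sums, if_pos hp] at h₁ h₂
      obtain ⟨c₁', hc₁, rfl⟩ := List.mem_map.mp h₁
      obtain ⟨c₂', hc₂, rfl⟩ := List.mem_map.mp h₂
      have := ih c₁' c₂' hc₁ hc₂
      simp only [add_sub_add_right_eq_sub, List.length_cons]
      omega
    · simp only [sums, if_neg hp] at h₁ h₂
      have b₁ := sums_natAbs L
      rcases List.mem_cons.mp h₁ with rfl | h₁ <;> rcases List.mem_cons.mp h₂ with rfl | h₂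
      · simp
      · have := b₁ c₂ h₂; simp only [zero_sub, Int.natAbs_neg, List.length_cons]; omega
      · have := b₁ c₁ h₁; simp only [sub_zero, List.length_cons]; omega
      · have := ih c₁ c₂ h₁ h₂; simp only [List.length_cons]; omega

lemma cnt_trans (m : ℕ) (i₀ : Fin 3) (t : ZMod m) :
    ∀ (L : List (Fin 3 × Bool)) (x : ZMod m), cnt m i₀ t L x = cnt m i₀ 0 L (x - t) := by
  intro L; induction L with
  | nil => intro x; rfl
  | cons p L ih =>
    intro x
    obtain ⟨i, s⟩ := p
    by_cases hi : i = 0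
    · simp only [cnt, if_pos hi, ih, sub_right_comm]
    · simp only [cnt, if_neg hi, ih]
      congr 1
      have h : (x = t) ↔ (x - t = 0) := by rw [sub_eq_zero]
      simp [h]

lemma cnt_pos (m : ℕ) (i₀ : Fin 3) :
    ∀ (L : List (Fin 3 × Bool)) (x : ZMod m), 0 < cnt m i₀ 0 L x →
      ∃ c ∈ sums L, (c : ZMod m) = x := by
  intro L; induction L with
  | nil => intro x h; simp [cnt] at h
  | cons p L ih =>
    intro x h
    obtain ⟨i, s⟩ := p
    by_cases hi : i = 0
    · simp only [cnt, if_pos hi] at h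
      obtain ⟨c, hc, hcx⟩ := ih _ h
      refine ⟨c + eps s, ?_, ?_⟩
      · simp only [sums, if_pos hi]
        exact List.mem_map.mpr ⟨c, hc, rfl⟩
      · push_cast
        rw [hcx]; abel
    · simp only [cnt, if_neg hi] at h
      by_cases htr : i = i₀ ∧ x = 0
      · exact ⟨0, by simp [sums, if_neg hi], by rw [Int.cast_zero, htr.2]⟩
      · rw [if_neg htr] at h
        obtain ⟨c, hc, hcx⟩ := ih x (by omega)
        exact ⟨c, by simp [sums, if_neg hi, hc], hcx⟩

lemma cnt_cast (m : ℕ) (i₀ : Fin 3) :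
    ∀ (L : List (Fin 3 × Bool)) (z : ℤ), (m = 0 ∨ z.natAbs + L.length < m) →
      cnt m i₀ 0 L ((z : ZMod m)) = cnt 0 i₀ 0 L ((z : ZMod 0)) := by
  intro L; induction L with
  | nil => intro z _; rfl
  | cons p L ih =>
    intro z hz
    obtain ⟨i, s⟩ := p
    by_cases hi : i = 0
    · simp only [cnt, if_pos hi]
      have e1 : (z : ZMod m) - ((eps s : ℤ) : ZMod m) = ((z - eps s : ℤ) : ZMod m) := by push_cast; ring
      have e2 : (z : ZMod 0) - ((eps s : ℤ) : ZMod 0) = ((z - eps s : ℤ) : ZMod 0) := by push_cast; ring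
      rw [e1, e2]
      apply ih
      have := Int.natAbs_sub_le z (eps s)
      have := eps_natAbs s
      simp only [List.length_cons] at hz
      omega
    · simp only [cnt, if_neg hi]
      have htr : ((z : ZMod m) = 0) ↔ ((z : ZMod 0) = 0) := by
        rw [ZMod.intCast_zmod_eq_zero_iff_dvd]
        show (m : ℤ) ∣ z ↔ z = 0
        rcases hz with rfl | hz
        · simp
        · constructor
          · intro hd
            rcases eq_or_ne z 0 with rfl | hne
            · rfl
            · exfalso
              have h1 : (m : ℕ) ∣ z.natAbs := by
                have h2 := Int.natAbs_dvd_natAbs.mpr hd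
                simpa using h2
              have := Nat.le_of_dvd (Int.natAbs_pos.mpr hne) h1
              omega
          · rintro rfl; exact dvd_zero _
      rw [ih z (by simp only [List.length_cons] at hz; omega)]
      congr 1
      split_ifs <;> tauto

lemma cnt_cons0 (m : ℕ) (i₀ : Fin 3) (t : ZMod m) (s : Bool) (L : List (Fin 3 × Bool))
    (x : ZMod m) : cnt m i₀ t ((0, s) :: L) x = cnt m i₀ t L (x - (eps s : ZMod m)) := by
  simp [cnt]

lemma cnt1_cons1 (m : ℕ) (t : ZMod m) (s : Bool) (L : List (Fin 3 × Bool)) (x : ZMod m) :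
    cnt m 1 t ((1, s) :: L) x = (if x = t then 1 else 0) + cnt m 1 t L x := by
  simp [cnt]

lemma cnt1_cons2 (m : ℕ) (t : ZMod m) (s : Bool) (L : List (Fin 3 × Bool)) (x : ZMod m) :
    cnt m 1 t ((2, s) :: L) x = cnt m 1 t L x := by
  simp [cnt]

lemma cnt2_cons1 (m : ℕ) (t : ZMod m) (s : Bool) (L : List (Fin 3 × Bool)) (x : ZMod m) :
    cnt m 2 t ((1, s) :: L) x = cnt m 2 t L x := by
  simp [cnt]

lemma cnt2_cons2 (m : ℕ) (t : ZMod m) (s : Bool) (L : List (Fin 3 × Bool)) (x : ZMod m) :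
    cnt m 2 t ((2, s) :: L) x = (if x = t then 1 else 0) + cnt m 2 t L x := by
  simp [cnt]

variable {G : Type*} [Group G]

lemma fcm_cons0 (m : ℕ) (a b : G) (K : ZMod m) (s : Bool) (L : List (Fin 3 × Bool))
    (x : ZMod m) : fcm m a b K ((0, s) :: L) x = fcm m a b K L (x - (eps s : ZMod m)) := by
  simp [fcm]

lemma fcm_cons1 (m : ℕ) (a b : G) (K : ZMod m) (s : Bool) (L : List (Fin 3 × Bool))
    (x : ZMod m) : fcm m a b K ((1, s) :: L) x = (if x = 0 then a else 1) * fcm m a b K L x := by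
  simp [fcm]

lemma fcm_cons2 (m : ℕ) (a b : G) (K : ZMod m) (s : Bool) (L : List (Fin 3 × Bool))
    (x : ZMod m) : fcm m a b K ((2, s) :: L) x = (if x = K then b else 1) * fcm m a b K L x := by
  simp [fcm]

lemma fin3_cases (i : Fin 3) : i = 0 ∨ i = 1 ∨ i = 2 := by omega

lemma fcm_eq_pow_a (m : ℕ) (a b : G) (K : ZMod m) :
    ∀ (L : List (Fin 3 × Bool)) (x : ZMod m), cnt m 2 K L x = 0 →
      fcm m a b K L x = a ^ cnt m 1 0 L x := by
  intro L; induction L with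
  | nil => intro x _; simp [fcm, cnt]
  | cons p L ih =>
    intro x h
    obtain ⟨i, s⟩ := p
    rcases fin3_cases i with rfl | rfl | rfl
    · rw [cnt_cons0] at h
      rw [fcm_cons0, cnt_cons0, ih _ h]
    · rw [cnt2_cons1] at h
      rw [fcm_cons1, cnt1_cons1, ih _ h]
      by_cases hx : x = 0
      · simp [hx, pow_add]
      · simp [hx]
    · rw [cnt2_cons2] at h
      have hx : ¬ x = K := by intro hx; rw [if_pos hx] at h; omega
      rw [if_neg hx, zero_add] at h
      rw [fcm_cons2, cnt1_cons2, if_neg hx, one_mul, ih _ h]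

lemma fcm_eq_pow_b (m : ℕ) (a b : G) (K : ZMod m) :
    ∀ (L : List (Fin 3 × Bool)) (x : ZMod m), cnt m 1 0 L x = 0 →
      fcm m a b K L x = b ^ cnt m 2 K L x := by
  intro L; induction L with
  | nil => intro x _; simp [fcm, cnt]
  | cons p L ih =>
    intro x h
    obtain ⟨i, s⟩ := p
    rcases fin3_cases i with rfl | rfl | rfl
    · rw [cnt_cons0] at h
      rw [fcm_cons0, cnt_cons0, ih _ h]
    · rw [cnt1_cons1] at h
      have hx : ¬ x = 0 := by intro hx; rw [if_pos hx] at h; omega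
      rw [if_neg hx, zero_add] at h
      rw [fcm_cons1, cnt2_cons1, if_neg hx, one_mul, ih _ h]
    · rw [cnt1_cons2] at h
      rw [fcm_cons2, cnt2_cons2, ih _ h]
      by_cases hx : x = K
      · simp [hx, pow_add]
      · simp [hx]

lemma fcm_comm (m : ℕ) {a b : G} (hab : a * b = b * a) :
    ∀ (L : List (Fin 3 × Bool)) (x : ZMod m),
      fcm m a b 0 L x = a ^ cnt m 1 0 L x * b ^ cnt m 2 0 L x := by
  intro L; induction L with
  | nil => intro x; simp [fcm, cnt]
  | cons p L ih =>
    intro x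
    obtain ⟨i, s⟩ := p
    rcases fin3_cases i with rfl | rfl | rfl
    · rw [fcm_cons0, cnt_cons0, cnt_cons0, ih]
    · rw [fcm_cons1, cnt1_cons1, cnt2_cons1, ih]
      by_cases hx : x = 0
      · simp [hx, pow_add, mul_assoc]
      · simp [hx]
    · rw [fcm_cons2, cnt1_cons2, cnt2_cons2, ih]
      by_cases hx : x = 0
      · subst hx
        simp only [if_pos rfl, ite_true]
        rw [pow_add, pow_one, ← mul_assoc, ← mul_assoc]
        congr 1
        exact ((show Commute b a from hab.symm).pow_right _).eq
      · simp [hx]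

lemma pow_invol {a : G} (h2 : a * a = 1) (N : ℕ) :
    a ^ N = if Even N then 1 else a := by
  induction N with
  | zero => simp
  | succ n ih =>
    by_cases hn : Even n
    · simp [pow_succ, ih, hn, Nat.even_add_one]
    · simp [pow_succ, ih, hn, Nat.even_add_one, h2]

lemma pow_invol_eq_one {a : G} (h2 : a * a = 1) (h1 : a ≠ 1) (N : ℕ) :
    a ^ N = 1 ↔ Even N := by
  rw [pow_invol h2]
  by_cases hN : Even N <;> simp [hN, h1]

lemma klein {a b : G} (ha2 : a * a = 1) (hb2 : b * b = 1) (ha : a ≠ 1) (hb : b ≠ 1)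
    (hab : a * b ≠ 1) (p q : ℕ) : a ^ p * b ^ q = 1 ↔ Even p ∧ Even q := by
  rw [pow_invol ha2, pow_invol hb2]
  by_cases hp : Even p <;> by_cases hq : Even q <;> simp [hp, hq, ha, hb, hab]

open Multiplicative

lemma gammaGens_zero (k l m : ℕ) : gammaGens k l m 0 = ⟨1, Multiplicative.ofAdd 1⟩ := rfl
lemma gammaGens_one (k l m : ℕ) : gammaGens k l m 1 = ⟨delta 0 (sr 0), 1⟩ := rfl
lemma gammaGens_two (k l m : ℕ) : gammaGens k l m 2 = ⟨delta (k : ZMod m) (sr 1), 1⟩ := rfl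

lemma shiftHom_apply {B : Type*} [AddCommGroup B] {L : Type*} [Group L]
    (t : Multiplicative B) (f : B → L) (x : B) : shiftHom B L t f x = f (x - t.toAdd) := rfl

lemma sr_inv {n : ℕ} (i : ZMod n) : (sr i : DihedralGroup n)⁻¹ = sr i :=
  inv_eq_of_mul_eq_one_right (sr_mul_self i)

lemma delta_inv {B : Type*} [DecidableEq B] {L : Type*} [Group L] (g : B) (v : L) :
    (delta g v)⁻¹ = delta g v⁻¹ := by
  funext x; simp [delta, apply_ite (·⁻¹)]

lemma sdp_ext {N G : Type*} [Group N] [Group G] {φ : G →* MulAut N} (x y : N ⋊[φ] G)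
    (h1 : x.left = y.left) (h2 : x.right = y.right) : x = y := by
  cases x; cases y; cases h1; cases h2; rfl

lemma eval_eq (k l m : ℕ) (L : List (Fin 3 × Bool)) :
    (L.map fun p => cond p.2 (gammaGens k l m p.1) (gammaGens k l m p.1)⁻¹).prod =
      ⟨fun x => fcm m (sr 0) (sr 1) ((k : ℕ) : ZMod m) L x,
        Multiplicative.ofAdd (((tdisp L : ℤ) : ZMod m))⟩ := by
  induction L with
  | nil =>
    refine (sdp_ext _ _ ?_ ?_).symm
    · funext x; simp [fcm, SemidirectProduct.one_left]
    · simp [tdisp, SemidirectProduct.one_right]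
  | cons p L ih =>
    obtain ⟨i, s⟩ := p
    rw [List.map_cons, List.prod_cons, ih]
    rcases fin3_cases i with rfl | rfl | rfl <;> cases s
    · -- τ⁻¹
      refine sdp_ext _ _ ?_ ?_
      · funext x
        simp only [cond_false, gammaGens_zero, SemidirectProduct.mul_left,
          SemidirectProduct.inv_left, SemidirectProduct.inv_right, inv_one, map_one,
          Pi.mul_apply, Pi.one_apply, one_mul, shiftHom_apply]
        rw [fcm_cons0]
        norm_num [eps]
      · simp only [cond_false, gammaGens_zero, SemidirectProduct.mul_right,
          SemidirectProduct.inv_right, tdisp]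
        rw [← ofAdd_neg, ← ofAdd_add]
        norm_num [eps]
    · -- τ
      refine sdp_ext _ _ ?_ ?_
      · funext x
        simp only [cond_true, gammaGens_zero, SemidirectProduct.mul_left, Pi.mul_apply,
          Pi.one_apply, one_mul, shiftHom_apply]
        rw [fcm_cons0]
        norm_num [eps]
      · simp only [cond_true, gammaGens_zero, SemidirectProduct.mul_right, tdisp]
        rw [← ofAdd_add]
        norm_num [eps]
    · -- α⁻¹
      refine sdp_ext _ _ ?_ ?_
      · funext x
        simp only [cond_false, gammaGens_one, SemidirectProduct.mul_left,
          SemidirectProduct.inv_left, SemidirectProduct.inv_right, inv_one, map_one,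
          MulAut.one_apply, Pi.mul_apply, delta_inv, sr_inv]
        rw [fcm_cons1]
        simp [delta]
      · simp only [cond_false, gammaGens_one, SemidirectProduct.mul_right,
          SemidirectProduct.inv_right, inv_one, one_mul, tdisp]
        norm_num
    · -- α
      refine sdp_ext _ _ ?_ ?_
      · funext x
        simp only [cond_true, gammaGens_one, SemidirectProduct.mul_left, map_one,
          MulAut.one_apply, Pi.mul_apply]
        rw [fcm_cons1]
        simp [delta]
      · simp only [cond_true, gammaGens_one, SemidirectProduct.mul_right, one_mul, tdisp]
        norm_num
    · -- β⁻¹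
      refine sdp_ext _ _ ?_ ?_
      · funext x
        simp only [cond_false, gammaGens_two, SemidirectProduct.mul_left,
          SemidirectProduct.inv_left, SemidirectProduct.inv_right, inv_one, map_one,
          MulAut.one_apply, Pi.mul_apply, delta_inv, sr_inv]
        rw [fcm_cons2]
        simp [delta]
      · simp only [cond_false, gammaGens_two, SemidirectProduct.mul_right,
          SemidirectProduct.inv_right, inv_one, one_mul, tdisp]
        norm_num
        exact fun h => absurd h (by decide)
    · -- β
      refine sdp_ext _ _ ?_ ?_
      · funext x
        simp only [cond_true, gammaGens_two, SemidirectProduct.mul_left, map_one,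
          MulAut.one_apply, Pi.mul_apply]
        rw [fcm_cons2]
        simp [delta]
      · simp only [cond_true, gammaGens_two, SemidirectProduct.mul_right, one_mul, tdisp]
        norm_num
        exact fun h => absurd h (by decide)

/-- The combinatorial condition characterizing trivial words. -/
def wordCond (L : List (Fin 3 × Bool)) : Prop :=
  tdisp L = 0 ∧ ∀ z : ℤ, Even (cnt 0 1 0 L (z : ZMod 0)) ∧ Even (cnt 0 2 0 L (z : ZMod 0))

lemma eval_eq_one_iff (k l m : ℕ) (L : List (Fin 3 × Bool)) :
    (L.map fun p => cond p.2 (gammaGens k l m p.1) (gammaGens k l m p.1)⁻¹).prod = 1 ↔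
      ((∀ x : ZMod m, fcm m (sr (0 : ZMod l)) (sr (1 : ZMod l)) ((k : ℕ) : ZMod m) L x = 1) ∧
        (((tdisp L : ℤ) : ZMod m) = 0)) := by
  rw [eval_eq]
  constructor
  · intro h
    have h1 := congrArg SemidirectProduct.left h
    have h2 := congrArg SemidirectProduct.right h
    simp only [SemidirectProduct.one_left, SemidirectProduct.one_right] at h1 h2
    refine ⟨fun x => ?_, ?_⟩
    · have := congrFun h1 x
      simpa using this
    · simpa using h2
  · rintro ⟨h1, h2⟩
    refine sdp_ext _ _ ?_ ?_
    · funext x; simpa using h1 x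
    · simpa using h2

lemma int_eq_zero_of_cast {m : ℕ} {v : ℤ} (h : ((v : ℤ) : ZMod m) = 0)
    (hb : m = 0 ∨ v.natAbs < m) : v = 0 := by
  rw [ZMod.intCast_zmod_eq_zero_iff_dvd] at h
  rcases hb with rfl | hb
  · simpa using h
  · rcases eq_or_ne v 0 with rfl | hne
    · rfl
    · exfalso
      have h1 : (m : ℕ) ∣ v.natAbs := by
        have h2 := Int.natAbs_dvd_natAbs.mpr h
        simpa using h2
      have := Nat.le_of_dvd (Int.natAbs_pos.mpr hne) h1
      omega

lemma factor_iff (k l m : ℕ) (hm : m = 0 ∨ 2 * k < m) (L : List (Fin 3 × Bool))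
    (hk : L.length + 2 ≤ k) :
    ((L.map fun p => cond p.2 (gammaGens k l m p.1) (gammaGens k l m p.1)⁻¹).prod = 1) ↔
      wordCond L := by
  rw [eval_eq_one_iff]
  have ha1 : (sr 0 : DihedralGroup l) ≠ 1 := by rw [one_def]; intro h; cases h
  have hb1 : (sr 1 : DihedralGroup l) ≠ 1 := by rw [one_def]; intro h; cases h
  have hbound : ∀ z : ℤ, z.natAbs ≤ L.length → (m = 0 ∨ z.natAbs + L.length < m) := by
    intro z hz
    rcases hm with rfl | hmm
    · exact Or.inl rfl
    · right; omega
  have hbound2 : ∀ v : ℤ, v.natAbs ≤ L.length + k → (m = 0 ∨ v.natAbs < m) := by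
    intro v hv
    rcases hm with rfl | hmm
    · exact Or.inl rfl
    · right; omega
  have hdich : ∀ x : ZMod m, cnt m 1 0 L x = 0 ∨ cnt m 2 ((k : ℕ) : ZMod m) L x = 0 := by
    intro x
    by_contra hc
    push_neg at hc
    obtain ⟨h1, h2⟩ := hc
    obtain ⟨c₁, hc₁, e₁⟩ := cnt_pos m 1 L x (Nat.pos_of_ne_zero h1)
    rw [cnt_trans] at h2
    obtain ⟨c₂, hc₂, e₂⟩ := cnt_pos m 2 L _ (Nat.pos_of_ne_zero h2)
    have key : ((c₁ - c₂ - (k : ℤ) : ℤ) : ZMod m) = 0 := by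
      push_cast
      rw [e₁, e₂]
      ring
    have hsp := sums_spread L c₁ c₂ hc₁ hc₂
    have := int_eq_zero_of_cast key (hbound2 _ (by omega))
    omega
  have hpt : ∀ x : ZMod m, (fcm m (sr (0 : ZMod l)) (sr (1 : ZMod l)) ((k : ℕ) : ZMod m) L x = 1 ↔
      Even (cnt m 1 0 L x) ∧ Even (cnt m 2 ((k : ℕ) : ZMod m) L x)) := by
    intro x
    rcases hdich x with h | h
    · rw [fcm_eq_pow_b m (sr (0 : ZMod l)) (sr (1 : ZMod l)) _ L x h,
        pow_invol_eq_one (sr_mul_self 1) hb1, h]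
      simp
    · rw [fcm_eq_pow_a m (sr (0 : ZMod l)) (sr (1 : ZMod l)) _ L x h,
        pow_invol_eq_one (sr_mul_self 0) ha1, h]
      simp
  constructor
  · rintro ⟨hf, ht⟩
    constructor
    · exact int_eq_zero_of_cast ht (hbound2 _ (by have := tsum_natAbs L; omega))
    · intro z
      by_cases hz : z.natAbs ≤ L.length
      · have c1 := ((hpt ((z : ℤ) : ZMod m)).mp (hf _)).1
        rw [cnt_cast m 1 L z (hbound z hz)] at c1
        have c2 := ((hpt (((z + (k : ℕ) : ℤ)) : ZMod m)).mp (hf _)).2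
        rw [cnt_trans] at c2
        have e : (((z + (k : ℕ) : ℤ)) : ZMod m) - ((k : ℕ) : ZMod m) = ((z : ℤ) : ZMod m) := by
          push_cast
          ring
        rw [e, cnt_cast m 2 L z (hbound z hz)] at c2
        exact ⟨c1, c2⟩
      · have hzero : ∀ i₀ : Fin 3, cnt 0 i₀ 0 L (z : ZMod 0) = 0 := by
          intro i₀
          by_contra hzz
          obtain ⟨c, hc, hcz⟩ := cnt_pos 0 i₀ L _ (Nat.pos_of_ne_zero hzz)
          have hcz' : c = z := hcz
          have := sums_natAbs L c hc
          omega
        rw [hzero 1, hzero 2]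
        simp
  · rintro ⟨ht, hz⟩
    refine ⟨fun x => ?_, by rw [ht]; simp⟩
    rw [hpt x]
    constructor
    · by_cases h0 : cnt m 1 0 L x = 0
      · simp [h0]
      · obtain ⟨c, hc, hcx⟩ := cnt_pos m 1 L x (Nat.pos_of_ne_zero h0)
        rw [← hcx, cnt_cast m 1 L c (hbound c (sums_natAbs L c hc))]
        exact (hz c).1
    · rw [cnt_trans]
      by_cases h0 : cnt m 2 0 L (x - ((k : ℕ) : ZMod m)) = 0
      · simp [h0]
      · obtain ⟨c, hc, hcx⟩ := cnt_pos m 2 L _ (Nat.pos_of_ne_zero h0)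
        rw [← hcx, cnt_cast m 2 L c (hbound c (sums_natAbs L c hc))]
        exact (hz c).2

lemma base_iff (L : List (Fin 3 × Bool)) :
    ((L.map fun p => cond p.2 (gammaGens 0 2 0 p.1) (gammaGens 0 2 0 p.1)⁻¹).prod = 1) ↔
      wordCond L := by
  rw [eval_eq_one_iff]
  have hcomm : (sr 0 : DihedralGroup 2) * sr 1 = sr 1 * sr 0 := by decide
  have hab : (sr 0 : DihedralGroup 2) * sr 1 ≠ 1 := by decide
  have ha1 : (sr 0 : DihedralGroup 2) ≠ 1 := by decide
  have hb1 : (sr 1 : DihedralGroup 2) ≠ 1 := by decide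
  have hpt : ∀ x : ZMod 0, (fcm 0 (sr (0 : ZMod 2)) (sr (1 : ZMod 2)) (((0 : ℕ)) : ZMod 0) L x = 1 ↔
      Even (cnt 0 1 0 L x) ∧ Even (cnt 0 2 0 L x)) := by
    intro x
    rw [show (((0 : ℕ)) : ZMod 0) = (0 : ZMod 0) by simp, fcm_comm 0 hcomm,
      klein (sr_mul_self 0) (sr_mul_self 1) ha1 hb1 hab]
  constructor
  · rintro ⟨hf, ht⟩
    refine ⟨int_eq_zero_of_cast ht (Or.inl rfl), fun z => (hpt _).mp (hf _)⟩
  · rintro ⟨ht, hz⟩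
    refine ⟨fun x => ?_, by rw [ht]; simp⟩
    rw [hpt x]
    exact hz x


/-- If `R < (min_s k_s − 1)/2`, a word of length at most `2R` in the three diagonal
generators represents the identity in the infinite diagonal product `Δ(k,l,m)`
iff it does in `ℤ ≀ D₂ = Γ(0,2,∞)`. -/
theorem stmt11 (k l m : ℕ → ℕ) (hl : ∀ s, l s = 0 ∨ 2 ≤ l s)
    (hm : ∀ s, m s = 0 ∨ 2 * k s < m s) (R : ℕ) (hR : ∀ s, 2 * R < k s - 1)
    (w : FreeGroup (Fin 3)) (hw : (FreeGroup.toWord w).length ≤ 2 * R) :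
    FreeGroup.lift (diagGens k l m) w = 1 ↔ FreeGroup.lift (gammaGens 0 2 0) w = 1 := by
  set L := FreeGroup.toWord w with hLdef
  have hlift : ∀ {H : Type} (_ : Group H) (f : Fin 3 → H),
      FreeGroup.lift f w = (L.map fun p => cond p.2 (f p.1) (f p.1)⁻¹).prod := by
    intro H _ f
    conv_lhs => rw [← FreeGroup.mk_toWord (x := w)]
    rw [FreeGroup.lift_mk]
  have hdiag : FreeGroup.lift (diagGens k l m) w = 1 ↔
      ∀ s, (L.map fun p => cond p.2 (gammaGens (k s) (l s) (m s) p.1)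
        (gammaGens (k s) (l s) (m s) p.1)⁻¹).prod = 1 := by
    rw [hlift _ (diagGens k l m), funext_iff]
    apply forall_congr'
    intro s
    rw [Pi.list_prod_apply, List.map_map, Pi.one_apply]
    have hmap : ((fun f : ∀ s, Wr (ZMod (m s)) (DihedralGroup (l s)) => f s) ∘
        fun p : Fin 3 × Bool => cond p.2 (diagGens k l m p.1) (diagGens k l m p.1)⁻¹) =
        fun p : Fin 3 × Bool => cond p.2 (gammaGens (k s) (l s) (m s) p.1)
          (gammaGens (k s) (l s) (m s) p.1)⁻¹ := by
      funext p
      obtain ⟨i, s'⟩ := p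
      cases s' <;> simp [diagGens, Pi.inv_apply]
    rw [hmap]
  rw [hdiag, hlift _ (gammaGens 0 2 0), base_iff L]
  have hfact : ∀ s, ((L.map fun p => cond p.2 (gammaGens (k s) (l s) (m s) p.1)
      (gammaGens (k s) (l s) (m s) p.1)⁻¹).prod = 1) ↔ wordCond L := by
    intro s
    exact factor_iff (k s) (l s) (m s) (hm s) L (by have := hR s; omega)
  constructor
  · intro h
    exact (hfact 0).mp (h 0)
  · intro h s
    exact (hfact s).mpr h

end Aux
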